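/- Let p > 2, f(t) = t²/2 − t^p/p, and define ρ : (0, ∞) \ {1} → ℝ by ρ(t) = −3 f''(t) f'(t)² + 6 (f(t) − f(1)) f''(t)² − 2 (f(t) − f(1)) f'''(t) f'(t). Then ρ(t) < 0 for all t ∈ (0, ∞) with t ≠ 1, and lim_{t→0⁺} ρ(t) = −6 f(1). -/

import Mathlib

set_option maxHeartbeats 1000000

open Set Real Filter


private lemma double_well (g g' g'' : ℝ → ℝ)
    (hg : ∀ x, HasDerivAt g (g' x) x)
    (hg' : ∀ x, HasDerivAt g' (g'' x) x)
    (h0 : g 0 = 0) (h0' : g' 0 = 0)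
    (hpos : ∀ x, x ≠ 0 → 0 < g'' x) :
    ∀ x, x ≠ 0 → 0 < g x := by
  have cg : Continuous g := by
    have : Differentiable ℝ g := fun x => (hg x).differentiableAt
    exact this.continuous
  have cg' : Continuous g' := by
    have : Differentiable ℝ g' := fun x => (hg' x).differentiableAt
    exact this.continuous
  have hder : ∀ x, deriv g x = g' x := fun x => (hg x).deriv
  have hder' : ∀ x, deriv g' x = g'' x := fun x => (hg' x).deriv
  have m1 : StrictMonoOn g' (Ici 0) := by
    apply strictMonoOn_of_deriv_pos (convex_Ici 0) cg'.continuousOn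
    intro x hx
    rw [interior_Ici] at hx
    rw [hder']
    exact hpos x (ne_of_gt hx)
  have m2 : StrictMonoOn g' (Iic 0) := by
    apply strictMonoOn_of_deriv_pos (convex_Iic 0) cg'.continuousOn
    intro x hx
    rw [interior_Iic] at hx
    rw [hder']
    exact hpos x (ne_of_lt hx)
  intro x hx
  rcases lt_or_gt_of_ne hx with h | h
  · have hanti : StrictAntiOn g (Iic 0) := by
      apply strictAntiOn_of_deriv_neg (convex_Iic 0) cg.continuousOn
      intro y hy
      rw [interior_Iic] at hy
      rw [hder]
      have := m2 (mem_Iic.mpr hy.le) (mem_Iic.mpr le_rfl) hy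
      rw [h0'] at this
      exact this
    have := hanti (mem_Iic.mpr h.le) (mem_Iic.mpr le_rfl) h
    rw [h0] at this
    exact this
  · have hmono : StrictMonoOn g (Ici 0) := by
      apply strictMonoOn_of_deriv_pos (convex_Ici 0) cg.continuousOn
      intro y hy
      rw [interior_Ici] at hy
      rw [hder]
      have := m1 (mem_Ici.mpr le_rfl) (mem_Ici.mpr hy.le) hy
      rw [h0'] at this
      exact this
    have := hmono (mem_Ici.mpr le_rfl) (mem_Ici.mpr h.le) h
    rw [h0] at this
    exact this

private lemma hd_cexp (c a x : ℝ) :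
    HasDerivAt (fun y : ℝ => c * Real.exp (a * y)) (c * a * Real.exp (a * x)) x := by
  have h0 : HasDerivAt (fun y : ℝ => a * y) a x := by
    simpa using (hasDerivAt_id x).const_mul a
  have h := (h0.exp).const_mul c
  refine h.congr_deriv ?_
  ring

private lemma G_pos (p : ℝ) (hp : 2 < p) (x : ℝ) (hx : x ≠ 0) :
    0 < 3 * exp ((2-p)*x) + (p-1)*(p-8) + (p-1)*(2*p-1) * exp ((p-2)*x)
      - (p-1)*(p-3) * exp (2*x) - (2*p^2-7*p+8) * exp (p*x)
      + (p-1) * exp ((2*p-2)*x) := by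
  have hp2 : (0:ℝ) < p - 2 := by linarith
  have hp1 : (0:ℝ) < p - 1 := by linarith
  set H : ℝ → ℝ := fun y => 3*(p-2)^2 * exp ((2-2*p)*y) + (p-1)*(2*p-1)*(p-2)^2 * exp ((-2)*y)
      - 4*(p-1)*(p-3) * exp ((2-p)*y) + (-(p^2*(2*p^2-7*p+8))) * exp ((0:ℝ)*y)
      + 4*(p-1)^3 * exp ((p-2)*y) with hH
  set H' : ℝ → ℝ := fun y => 3*(p-2)^2*(2-2*p) * exp ((2-2*p)*y)
      + (p-1)*(2*p-1)*(p-2)^2*(-2) * exp ((-2)*y)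
      - 4*(p-1)*(p-3)*(2-p) * exp ((2-p)*y) + 0 * exp ((0:ℝ)*y)
      + 4*(p-1)^3*(p-2) * exp ((p-2)*y) with hH'
  set H'' : ℝ → ℝ := fun y => 3*(p-2)^2*(2-2*p)^2 * exp ((2-2*p)*y)
      + 4*(p-1)*(2*p-1)*(p-2)^2 * exp ((-2)*y)
      - 4*(p-1)*(p-3)*(2-p)^2 * exp ((2-p)*y)
      + 4*(p-1)^3*(p-2)^2 * exp ((p-2)*y) with hH''
  have hHd : ∀ y, HasDerivAt H (H' y) y := by
    intro y
    have h := ((((hd_cexp (3*(p-2)^2) (2-2*p) y).add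
      (hd_cexp ((p-1)*(2*p-1)*(p-2)^2) (-2) y)).sub
      (hd_cexp (4*(p-1)*(p-3)) (2-p) y)).add
      (hd_cexp (-(p^2*(2*p^2-7*p+8))) 0 y)).add
      (hd_cexp (4*(p-1)^3) (p-2) y)
    simp only [hH, hH']
    refine h.congr_deriv ?_
    ring
  have hHd' : ∀ y, HasDerivAt H' (H'' y) y := by
    intro y
    have h := ((((hd_cexp (3*(p-2)^2*(2-2*p)) (2-2*p) y).add
      (hd_cexp ((p-1)*(2*p-1)*(p-2)^2*(-2)) (-2) y)).sub
      (hd_cexp (4*(p-1)*(p-3)*(2-p)) (2-p) y)).add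
      (hd_cexp 0 0 y)).add
      (hd_cexp (4*(p-1)^3*(p-2)) (p-2) y)
    simp only [hH', hH'']
    refine h.congr_deriv ?_
    ring
  have c1 : (0:ℝ) < 3*(p-2)^2*(2-2*p)^2 := by
    nlinarith [mul_pos (mul_pos hp2 hp2) (mul_pos hp1 hp1)]
  have c2 : (0:ℝ) < 4*(p-1)*(2*p-1)*(p-2)^2 := by
    nlinarith [mul_pos (mul_pos hp1 (show (0:ℝ) < 2*p-1 by linarith)) (mul_pos hp2 hp2)]
  have c4 : (0:ℝ) < 4*(p-1)^3*(p-2)^2 := by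
    nlinarith [mul_pos (mul_pos (mul_pos hp1 hp1) hp1) (mul_pos hp2 hp2)]
  have hH''pos : ∀ y, 0 < H'' y := by
    intro y
    have e1 : (0:ℝ) < exp ((2-2*p)*y) := exp_pos _
    have e2 : (0:ℝ) < exp ((-2)*y) := exp_pos _
    have e3 : (0:ℝ) < exp ((2-p)*y) := exp_pos _
    have e4 : (0:ℝ) < exp ((p-2)*y) := exp_pos _
    simp only [hH'']
    rcases le_or_gt p 3 with h3 | h3
    · have t3 : 4*(p-1)*(p-3)*(2-p)^2 * exp ((2-p)*y) ≤ 0 := by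
        apply mul_nonpos_of_nonpos_of_nonneg _ e3.le
        nlinarith [mul_nonneg (mul_nonneg (by linarith : (0:ℝ) ≤ 3-p)
          (by linarith : (0:ℝ) ≤ 4*(p-1))) (sq_nonneg (2-p))]
      nlinarith [mul_pos c1 e1, mul_pos c2 e2, mul_pos c4 e4]
    · rcases le_or_gt 0 y with hy | hy
      · have hw : exp ((2-p)*y) ≤ exp ((p-2)*y) := by
          apply exp_le_exp.mpr
          nlinarith
        have ccomp : 4*(p-1)*(p-3)*(2-p)^2 ≤ 4*(p-1)^3*(p-2)^2 := by
          nlinarith [mul_nonneg (mul_nonneg (by linarith : (0:ℝ) ≤ 4*(p-1)) (sq_nonneg (p-2)))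
            (by nlinarith [sq_nonneg (2*p-3)] : (0:ℝ) ≤ p^2-3*p+4)]
        have key : 4*(p-1)*(p-3)*(2-p)^2 * exp ((2-p)*y) ≤ 4*(p-1)^3*(p-2)^2 * exp ((p-2)*y) := by
          have h1 : 4*(p-1)*(p-3)*(2-p)^2 * exp ((2-p)*y) ≤ 4*(p-1)*(p-3)*(2-p)^2 * exp ((p-2)*y) := by
            apply mul_le_mul_of_nonneg_left hw
            nlinarith [mul_nonneg (mul_nonneg (by linarith : (0:ℝ) ≤ 4*(p-1))
              (by linarith : (0:ℝ) ≤ p-3)) (sq_nonneg (2-p))]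
          have h2 : 4*(p-1)*(p-3)*(2-p)^2 * exp ((p-2)*y) ≤ 4*(p-1)^3*(p-2)^2 * exp ((p-2)*y) :=
            mul_le_mul_of_nonneg_right ccomp e4.le
          linarith
        nlinarith [mul_pos c1 e1, mul_pos c2 e2]
      · have hw : exp ((2-p)*y) ≤ exp ((2-2*p)*y) := by
          apply exp_le_exp.mpr
          nlinarith
        have ccomp : 4*(p-1)*(p-3)*(2-p)^2 ≤ 3*(p-2)^2*(2-2*p)^2 := by
          nlinarith [mul_nonneg (mul_nonneg (by linarith : (0:ℝ) ≤ 4*(p-1)) (sq_nonneg (p-2)))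
            (by linarith : (0:ℝ) ≤ 2*p)]
        have key : 4*(p-1)*(p-3)*(2-p)^2 * exp ((2-p)*y) ≤ 3*(p-2)^2*(2-2*p)^2 * exp ((2-2*p)*y) := by
          have h1 : 4*(p-1)*(p-3)*(2-p)^2 * exp ((2-p)*y) ≤ 4*(p-1)*(p-3)*(2-p)^2 * exp ((2-2*p)*y) := by
            apply mul_le_mul_of_nonneg_left hw
            nlinarith [mul_nonneg (mul_nonneg (by linarith : (0:ℝ) ≤ 4*(p-1))
              (by linarith : (0:ℝ) ≤ p-3)) (sq_nonneg (2-p))]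
          have h2 : 4*(p-1)*(p-3)*(2-p)^2 * exp ((2-2*p)*y) ≤ 3*(p-2)^2*(2-2*p)^2 * exp ((2-2*p)*y) :=
            mul_le_mul_of_nonneg_right ccomp e1.le
          linarith
        nlinarith [mul_pos c2 e2, mul_pos c4 e4]
  have hH0 : H 0 = 0 := by
    simp only [hH, mul_zero, exp_zero, mul_one]
    ring
  have hH'0 : H' 0 = 0 := by
    simp only [hH', mul_zero, exp_zero, mul_one]
    ring
  have Hpos : ∀ y, y ≠ 0 → 0 < H y :=
    double_well H H' H'' hHd hHd' hH0 hH'0 (fun y _ => hH''pos y)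
  -- Now G level
  set G : ℝ → ℝ := fun y => 3 * exp ((2-p)*y) + (p-1)*(p-8) * exp ((0:ℝ)*y)
      + (p-1)*(2*p-1) * exp ((p-2)*y) - (p-1)*(p-3) * exp (2*y)
      - (2*p^2-7*p+8) * exp (p*y) + (p-1) * exp ((2*p-2)*y) with hG
  set G' : ℝ → ℝ := fun y => 3*(2-p) * exp ((2-p)*y) + 0 * exp ((0:ℝ)*y)
      + (p-1)*(2*p-1)*(p-2) * exp ((p-2)*y) - (p-1)*(p-3)*2 * exp (2*y)
      - (2*p^2-7*p+8)*p * exp (p*y) + (p-1)*(2*p-2) * exp ((2*p-2)*y) with hG'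
  set G'' : ℝ → ℝ := fun y => 3*(2-p)^2 * exp ((2-p)*y) + 0 * exp ((0:ℝ)*y)
      + (p-1)*(2*p-1)*(p-2)^2 * exp ((p-2)*y) - (p-1)*(p-3)*4 * exp (2*y)
      - (2*p^2-7*p+8)*p^2 * exp (p*y) + (p-1)*(2*p-2)^2 * exp ((2*p-2)*y) with hG''
  have hGd : ∀ y, HasDerivAt G (G' y) y := by
    intro y
    have h := (((((hd_cexp 3 (2-p) y).add
      (hd_cexp ((p-1)*(p-8)) 0 y)).add
      (hd_cexp ((p-1)*(2*p-1)) (p-2) y)).sub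
      (hd_cexp ((p-1)*(p-3)) 2 y)).sub
      (hd_cexp ((2*p^2-7*p+8)) p y)).add
      (hd_cexp (p-1) (2*p-2) y)
    simp only [hG, hG']
    refine h.congr_deriv ?_
    ring
  have hGd' : ∀ y, HasDerivAt G' (G'' y) y := by
    intro y
    have h := (((((hd_cexp (3*(2-p)) (2-p) y).add
      (hd_cexp 0 0 y)).add
      (hd_cexp ((p-1)*(2*p-1)*(p-2)) (p-2) y)).sub
      (hd_cexp ((p-1)*(p-3)*2) 2 y)).sub
      (hd_cexp ((2*p^2-7*p+8)*p) p y)).add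
      (hd_cexp ((p-1)*(2*p-2)) (2*p-2) y)
    simp only [hG', hG'']
    refine h.congr_deriv ?_
    ring
  have hG''pos : ∀ y, y ≠ 0 → 0 < G'' y := by
    intro y hy
    have hGH : G'' y = exp (p*y) * H y := by
      have m1 : exp (p*y) * exp ((2-2*p)*y) = exp ((2-p)*y) := by
        rw [← exp_add]; congr 1; ring
      have m2 : exp (p*y) * exp ((-2)*y) = exp ((p-2)*y) := by
        rw [← exp_add]; congr 1; ring
      have m3 : exp (p*y) * exp ((2-p)*y) = exp (2*y) := by
        rw [← exp_add]; congr 1; ring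
      have m4 : exp (p*y) * exp ((0:ℝ)*y) = exp (p*y) := by
        rw [← exp_add]; congr 1; ring
      have m5 : exp (p*y) * exp ((p-2)*y) = exp ((2*p-2)*y) := by
        rw [← exp_add]; congr 1; ring
      simp only [hG'', hH]
      linear_combination (-(3*(p-2)^2)) * m1 - ((p-1)*(2*p-1)*(p-2)^2) * m2
        + (4*(p-1)*(p-3)) * m3 + (p^2*(2*p^2-7*p+8)) * m4 - (4*(p-1)^3) * m5
    rw [hGH]
    exact mul_pos (exp_pos _) (Hpos y hy)
  have hG0 : G 0 = 0 := by
    simp only [hG, mul_zero, exp_zero, mul_one]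
    ring
  have hG'0 : G' 0 = 0 := by
    simp only [hG', mul_zero, exp_zero, mul_one]
    ring
  have Gpos : ∀ y, y ≠ 0 → 0 < G y :=
    double_well G G' G'' hGd hGd' hG0 hG'0 hG''pos
  have := Gpos x hx
  simp only [hG, zero_mul, exp_zero, mul_one] at this
  linarith [this]

theorem stmt_5 (p : ℝ) (hp : 2 < p) (f ρ : ℝ → ℝ)
    (hf : ∀ t : ℝ, f t = t ^ 2 / 2 - t ^ p / p)
    (hρ : ∀ t : ℝ, 0 < t → t ≠ 1 →
      ρ t = -3 * deriv (deriv f) t * (deriv f t) ^ 2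
        + 6 * (f t - f 1) * (deriv (deriv f) t) ^ 2
        - 2 * (f t - f 1) * deriv (deriv (deriv f)) t * deriv f t) :
    (∀ t : ℝ, 0 < t → t ≠ 1 → ρ t < 0) ∧
    Tendsto ρ (nhdsWithin 0 (Ioi 0)) (nhds (-6 * f 1)) := by
  have hp0 : (0:ℝ) < p := by linarith
  have hp2' : (0:ℝ) < p - 2 := by linarith
  have hfe : f = fun t => t ^ 2 / 2 - t ^ p / p := funext hf
  subst hfe
  have hd1 : ∀ t : ℝ, 0 < t → HasDerivAt (fun u : ℝ => u ^ 2 / 2 - u ^ p / p)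
      (t - t ^ (p-1)) t := by
    intro t ht
    have h1 : HasDerivAt (fun u : ℝ => u ^ 2 / 2) t t := by
      have h := (hasDerivAt_pow 2 t).div_const 2
      refine h.congr_deriv ?_
      norm_num
    have h2 : HasDerivAt (fun u : ℝ => u ^ p / p) (t ^ (p-1)) t := by
      have h := (Real.hasDerivAt_rpow_const (x := t) (p := p) (Or.inl (ne_of_gt ht))).div_const p
      refine h.congr_deriv ?_
      field_simp
    exact h1.sub h2
  have hD1 : ∀ t : ℝ, 0 < t → deriv (fun u : ℝ => u ^ 2 / 2 - u ^ p / p) t = t - t ^ (p-1) :=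
    fun t ht => (hd1 t ht).deriv
  have hd2 : ∀ t : ℝ, 0 < t → HasDerivAt (fun u : ℝ => u - u ^ (p-1))
      (1 - (p-1) * t ^ (p-2)) t := by
    intro t ht
    have h2 := Real.hasDerivAt_rpow_const (x := t) (p := p-1) (Or.inl (ne_of_gt ht))
    rw [show p - 1 - 1 = p - 2 by ring] at h2
    exact (hasDerivAt_id t).sub h2
  have hD2 : ∀ t : ℝ, 0 < t → deriv (deriv (fun u : ℝ => u ^ 2 / 2 - u ^ p / p)) t
      = 1 - (p-1) * t ^ (p-2) := by
    intro t ht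
    have hev : deriv (fun u : ℝ => u ^ 2 / 2 - u ^ p / p) =ᶠ[nhds t]
        (fun u => u - u ^ (p-1)) := by
      filter_upwards [Ioi_mem_nhds ht] with u hu
      exact hD1 u hu
    rw [hev.deriv_eq]
    exact (hd2 t ht).deriv
  have hd3 : ∀ t : ℝ, 0 < t → HasDerivAt (fun u : ℝ => 1 - (p-1) * u ^ (p-2))
      (-((p-1) * ((p-2) * t ^ (p-3)))) t := by
    intro t ht
    have h2 := (Real.hasDerivAt_rpow_const (x := t) (p := p-2)
      (Or.inl (ne_of_gt ht))).const_mul (p-1)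
    rw [show p - 2 - 1 = p - 3 by ring] at h2
    have h := (hasDerivAt_const t (1:ℝ)).sub h2
    refine h.congr_deriv ?_
    ring
  have hD3 : ∀ t : ℝ, 0 < t → deriv (deriv (deriv (fun u : ℝ => u ^ 2 / 2 - u ^ p / p))) t
      = -((p-1) * ((p-2) * t ^ (p-3))) := by
    intro t ht
    have hev : deriv (deriv (fun u : ℝ => u ^ 2 / 2 - u ^ p / p)) =ᶠ[nhds t]
        (fun u => 1 - (p-1) * u ^ (p-2)) := by
      filter_upwards [Ioi_mem_nhds ht] with u hu
      exact hD2 u hu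
    rw [hev.deriv_eq]
    exact (hd3 t ht).deriv
  have e2 : ∀ t : ℝ, 0 < t → t ^ (2:ℝ) = t ^ (2:ℕ) := by
    intro t ht
    rw [← Real.rpow_natCast t 2]
    norm_num
  have ep1 : ∀ t : ℝ, 0 < t → t ^ (p-1) = t ^ (p-2) * t := by
    intro t ht
    have h := Real.rpow_add ht (p-2) 1
    rw [show p-2+1 = p-1 by ring, Real.rpow_one] at h
    exact h
  have ep : ∀ t : ℝ, 0 < t → t ^ p = t ^ (p-2) * t ^ (2:ℕ) := by
    intro t ht
    have h := Real.rpow_add ht (p-2) 2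
    rw [show p-2+2 = p by ring, e2 t ht] at h
    exact h
  have ep3 : ∀ t : ℝ, 0 < t → t ^ (p-3) = t ^ (p-2) / t := by
    intro t ht
    have h := Real.rpow_sub ht (p-2) 1
    rw [show p-2-1 = p-3 by ring, Real.rpow_one] at h
    exact h
  constructor
  · intro t ht ht1
    have hne : t ≠ 0 := ne_of_gt ht
    have hlog : Real.log t ≠ 0 := by
      intro h
      apply ht1
      have h2 := Real.exp_log ht
      rw [h, Real.exp_zero] at h2
      exact h2.symm
    have hGp := G_pos p hp (Real.log t) hlog
    have hexp : ∀ c : ℝ, exp (c * Real.log t) = t ^ c := by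
      intro c
      rw [Real.rpow_def_of_pos ht, mul_comm]
    rw [hexp (2-p), hexp (p-2), hexp 2, hexp p, hexp (2*p-2)] at hGp
    have hs : (0:ℝ) < t ^ (p-2) := Real.rpow_pos_of_pos ht _
    have hsne : t ^ (p-2) ≠ 0 := ne_of_gt hs
    have e2p : t ^ (2-p) = (t ^ (p-2))⁻¹ := by
      rw [show (2-p) = -(p-2) by ring, Real.rpow_neg ht.le]
    have e2p2 : t ^ (2*p-2) = t ^ (p-2) * (t ^ (p-2) * t ^ (2:ℕ)) := by
      have h := Real.rpow_add ht (p-2) p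
      rw [show p-2+p = 2*p-2 by ring, ep t ht] at h
      exact h
    rw [e2p, e2p2, ep t ht, e2 t ht] at hGp
    have hGp2 := mul_pos hs hGp
    have hexpand : t ^ (p-2) * (3 * (t ^ (p-2))⁻¹ + (p-1)*(p-8)
        + (p-1)*(2*p-1) * t ^ (p-2) - (p-1)*(p-3) * t ^ (2:ℕ)
        - (2*p^2-7*p+8) * (t ^ (p-2) * t ^ (2:ℕ))
        + (p-1) * (t ^ (p-2) * (t ^ (p-2) * t ^ (2:ℕ))))
        = 3 + (p-1)*(p-8) * t ^ (p-2) + (p-1)*(2*p-1) * (t ^ (p-2))^2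
        - (p-1)*(p-3) * (t ^ (p-2) * t^2) - (2*p^2-7*p+8) * ((t ^ (p-2))^2 * t^2)
        + (p-1) * ((t ^ (p-2))^3 * t^2) := by
      field_simp
    rw [hexpand] at hGp2
    rw [hρ t ht ht1, hD1 t ht, hD2 t ht, hD3 t ht, hf t, hf 1, Real.one_rpow, one_pow,
      ep1 t ht, ep t ht, ep3 t ht]
    have hkey := mul_pos (mul_pos hp2' ht) hGp2
    have hEeq : -3 * (1 - (p - 1) * t ^ (p - 2)) * (t - t ^ (p - 2) * t) ^ 2 +
          6 * (t ^ 2 / 2 - t ^ (p - 2) * t ^ 2 / p - (1 / 2 - 1 / p)) * (1 - (p - 1) * t ^ (p - 2)) ^ 2 -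
        2 * (t ^ 2 / 2 - t ^ (p - 2) * t ^ 2 / p - (1 / 2 - 1 / p)) * -((p - 1) * ((p - 2) * (t ^ (p - 2) / t))) *
          (t - t ^ (p - 2) * t)
        = -((p - 2) * t * (3 + (p - 1) * (p - 8) * t ^ (p - 2) + (p - 1) * (2 * p - 1) * (t ^ (p - 2)) ^ 2 -
            (p - 1) * (p - 3) * (t ^ (p - 2) * t ^ 2) -
          (2 * p ^ 2 - 7 * p + 8) * ((t ^ (p - 2)) ^ 2 * t ^ 2) +
        (p - 1) * ((t ^ (p - 2)) ^ 3 * t ^ 2))) / (p * t) := by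
      field_simp
      ring
    rw [hEeq]
    apply div_neg_of_neg_of_pos
    · linarith [hkey]
    · exact mul_pos hp0 ht
  · have hev2 : ρ =ᶠ[nhdsWithin 0 (Ioi 0)] (fun t =>
        -3*(1-(p-1)*t^(p-2))*(t - t^(p-2)*t)^2
        + 6*((t^(2:ℕ)/2 - t^(p-2)*t^(2:ℕ)/p) - (1/2 - 1/p))*(1-(p-1)*t^(p-2))^2
        + 2*((t^(2:ℕ)/2 - t^(p-2)*t^(2:ℕ)/p) - (1/2 - 1/p))*((p-1)*(p-2))
            *(t^(p-2) - t^(p-2)*t^(p-2))) := by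
      filter_upwards [Ioo_mem_nhdsGT_of_mem (show (0:ℝ) ∈ Ico (0:ℝ) 1 by simp)] with t htt
      obtain ⟨ht, ht1⟩ := htt
      have hne : t ≠ 0 := ne_of_gt ht
      rw [hρ t ht (ne_of_lt ht1), hD1 t ht, hD2 t ht, hD3 t ht, hf t, hf 1, Real.one_rpow,
        one_pow, ep1 t ht, ep t ht, ep3 t ht]
      field_simp
      ring
    rw [tendsto_congr' hev2]
    have hs0 : Tendsto (fun t:ℝ => t^(p-2)) (nhdsWithin 0 (Ioi 0)) (nhds 0) := by
      have c := (Real.continuousAt_rpow_const 0 (p-2) (Or.inr (by linarith))).tendsto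
      rw [Real.zero_rpow (show p-2 ≠ 0 by linarith)] at c
      exact c.mono_left nhdsWithin_le_nhds
    have ht0 : Tendsto (fun t:ℝ => t) (nhdsWithin 0 (Ioi 0)) (nhds 0) :=
      tendsto_id.mono_left nhdsWithin_le_nhds
    have hpair : Tendsto (fun t:ℝ => (t, t^(p-2))) (nhdsWithin 0 (Ioi 0))
        (nhds ((0:ℝ),(0:ℝ))) := ht0.prodMk_nhds hs0
    have hcont : Continuous (fun q : ℝ×ℝ =>
        -3*(1-(p-1)*q.2)*(q.1 - q.2*q.1)^2
        + 6*((q.1^(2:ℕ)/2 - q.2*q.1^(2:ℕ)/p) - (1/2 - 1/p))*(1-(p-1)*q.2)^2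
        + 2*((q.1^(2:ℕ)/2 - q.2*q.1^(2:ℕ)/p) - (1/2 - 1/p))*((p-1)*(p-2))
            *(q.2 - q.2*q.2)) := by
      fun_prop
    have hlim := (hcont.tendsto ((0:ℝ),(0:ℝ))).comp hpair
    have hval : -6 * ((1:ℝ) ^ 2 / 2 - (1:ℝ) ^ p / p) =
        -3*(1-(p-1)*(0:ℝ))*((0:ℝ) - 0*0)^2
        + 6*(((0:ℝ)^(2:ℕ)/2 - 0*(0:ℝ)^(2:ℕ)/p) - (1/2 - 1/p))*(1-(p-1)*0)^2
        + 2*(((0:ℝ)^(2:ℕ)/2 - 0*(0:ℝ)^(2:ℕ)/p) - (1/2 - 1/p))*((p-1)*(p-2))*((0:ℝ) - 0*0) := by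
      rw [Real.one_rpow]
      norm_num
      ring
    simp only [hf]
    rw [hval]
    exact hlim
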